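/- Let Σ be a finite alphabet of size q ≥ 2, n ≥ 1, and let (K, Enc, Dec) be a finitary messageless secret-key code over Σ with codeword length n. Suppose the code has soundness error ε_s (for every fixed γ̂ ∈ Σ^n, P_sk[Dec(sk, γ̂) ≠ invalid] ≤ ε_s). Let U be uniformly distributed on Σ^n, independent of sk, and suppose the tamper-detection failure against the uniform tamperer is at most ε_t, i.e. P[Dec(sk, U) ≠ tampered ∧ U ≠ Enc(sk)] ≤ ε_t. Then ε_s + ε_t ≥ 1 − q^{−n}. -/
import Mathlib


open Finset Classical

/-- Decoding outcomes of a messageless secret-key code. -/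
inductive DecOut where
  | valid
  | invalid
  | tampered
deriving DecidableEq

/-- For any finitary messageless secret-key code over an alphabet of size
`q ≥ 2` with codeword length `n ≥ 1`, soundness error `εs`, and tamper-detection failure
at most `εt` against the uniform tamperer (an independent uniform `U` on `Σ^n`),
we have `εs + εt ≥ 1 - q^(-n)`. -/
theorem stmt_0
    {S K : Type} [Fintype S] [DecidableEq S] [Fintype K] [Nonempty K]
    {n : ℕ} (hn : 1 ≤ n) (hq : 2 ≤ Fintype.card S)
    (w : K → ℝ) (hw0 : ∀ k, 0 ≤ w k) (hw1 : ∑ k, w k = 1)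
    (Enc : K → Fin n → S) (Dec : K → (Fin n → S) → DecOut)
    (εs εt : ℝ)
    (hsound : ∀ γ : Fin n → S,
      (∑ k, if Dec k γ ≠ DecOut.invalid then w k else 0) ≤ εs)
    (htamper :
      (∑ k, ∑ u : Fin n → S,
        if Dec k u ≠ DecOut.tampered ∧ u ≠ Enc k
        then w k * ((Fintype.card S : ℝ) ^ n)⁻¹ else 0) ≤ εt) :
    1 - ((Fintype.card S : ℝ) ^ n)⁻¹ ≤ εs + εt := by
  classical
  set q : ℝ := (Fintype.card S : ℝ) with hqdef
  set p : ℝ := (q ^ n)⁻¹ with hpdef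
  have hq0 : (0:ℝ) < q := by
    have h : (0:ℕ) < Fintype.card S := by omega
    rw [hqdef]
    exact_mod_cast h
  have hqn : (0:ℝ) < q ^ n := pow_pos hq0 n
  have hp0 : 0 ≤ p := le_of_lt (inv_pos.mpr hqn)
  have hqp : q ^ n * p = 1 := mul_inv_cancel₀ (ne_of_gt hqn)
  have hcard : (Fintype.card (Fin n → S) : ℝ) = q ^ n := by
    rw [Fintype.card_fun, Fintype.card_fin]
    push_cast
    rfl
  -- total probability is 1
  have total : ∑ k, ∑ _u : Fin n → S, w k * p = 1 := by
    have h1 : ∀ k : K, ∑ _u : Fin n → S, w k * p = w k := by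
      intro k
      rw [Finset.sum_const, Finset.card_univ, nsmul_eq_mul, hcard]
      rw [show q ^ n * (w k * p) = w k * (q ^ n * p) by ring, hqp, mul_one]
    rw [Finset.sum_congr rfl (fun k _ => h1 k), hw1]
  -- pointwise split
  have key : ∀ (k : K) (u : Fin n → S),
      w k * p = (if u = Enc k then w k * p else 0)
        + (if Dec k u ≠ DecOut.tampered ∧ u ≠ Enc k then w k * p else 0)
        + (if Dec k u = DecOut.tampered ∧ u ≠ Enc k then w k * p else 0) := by
    intro k u
    by_cases h1 : u = Enc k <;> by_cases h2 : Dec k u = DecOut.tampered <;>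
      simp [h1, h2]
  have split : (1:ℝ)
      = (∑ k, ∑ u : Fin n → S, if u = Enc k then w k * p else 0)
      + (∑ k, ∑ u : Fin n → S,
          if Dec k u ≠ DecOut.tampered ∧ u ≠ Enc k then w k * p else 0)
      + (∑ k, ∑ u : Fin n → S,
          if Dec k u = DecOut.tampered ∧ u ≠ Enc k then w k * p else 0) := by
    rw [← total]
    rw [← Finset.sum_add_distrib, ← Finset.sum_add_distrib]
    refine Finset.sum_congr rfl (fun k _ => ?_)
    rw [← Finset.sum_add_distrib, ← Finset.sum_add_distrib]
    exact Finset.sum_congr rfl (fun u _ => key k u)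
  -- A = p
  have hA : (∑ k, ∑ u : Fin n → S, if u = Enc k then w k * p else 0) = p := by
    have h1 : ∀ k : K, (∑ u : Fin n → S, if u = Enc k then w k * p else 0)
        = w k * p := by
      intro k
      simp
    rw [Finset.sum_congr rfl (fun k _ => h1 k), ← Finset.sum_mul, hw1, one_mul]
  -- C ≤ εs
  have hC : (∑ k, ∑ u : Fin n → S,
      if Dec k u = DecOut.tampered ∧ u ≠ Enc k then w k * p else 0) ≤ εs := by
    rw [Finset.sum_comm]
    have hperu : ∀ u : Fin n → S,
        (∑ k, if Dec k u = DecOut.tampered ∧ u ≠ Enc k then w k * p else 0)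
        ≤ εs * p := by
      intro u
      have step : (∑ k, if Dec k u = DecOut.tampered ∧ u ≠ Enc k then w k * p else 0)
          ≤ (∑ k, if Dec k u ≠ DecOut.invalid then w k else 0) * p := by
        rw [Finset.sum_mul]
        refine Finset.sum_le_sum (fun k _ => ?_)
        by_cases h : Dec k u = DecOut.tampered ∧ u ≠ Enc k
        · have hni : Dec k u ≠ DecOut.invalid := by
            rw [h.1]; intro hcon; exact DecOut.noConfusion hcon
          rw [if_pos h, if_pos hni]
        · rw [if_neg h]
          by_cases h2 : Dec k u ≠ DecOut.invalid
          · rw [if_pos h2]; exact mul_nonneg (hw0 k) hp0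
          · rw [if_neg h2, zero_mul]
      exact step.trans (mul_le_mul_of_nonneg_right (hsound u) hp0)
    calc (∑ u : Fin n → S, ∑ k,
          if Dec k u = DecOut.tampered ∧ u ≠ Enc k then w k * p else 0)
        ≤ ∑ _u : Fin n → S, εs * p := Finset.sum_le_sum (fun u _ => hperu u)
      _ = εs := by
          rw [Finset.sum_const, Finset.card_univ, nsmul_eq_mul, hcard]
          rw [show q ^ n * (εs * p) = εs * (q ^ n * p) by ring, hqp, mul_one]
  have hB := htamper
  linarith [split, hA, hC, hB]
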